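/- Let M = [m_{ij}] be an n×n real Nekrasov matrix with m_{ii} = 1 for all i. Then for every diagonal matrix D = diag(d_1,…,d_n) with 0 ≤ d_i ≤ 1 for all i, the matrix I − D + DM is invertible and ‖(I − D + DM)^{-1}‖_∞ ≤ max_{1 ≤ i ≤ n} η_i(M)/(1 − h_i(M)). -/

import Mathlib

open Finset

noncomputable def nekH {n : ℕ} {𝕜 : Type*} [RCLike 𝕜] (A : Matrix (Fin n) (Fin n) 𝕜) : Fin n → ℝ
  | i =>
    (∑ j : Fin n, if h : j < i then ‖A i j‖ / ‖A j j‖ * nekH A j else 0)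
      + ∑ j : Fin n, if i < j then ‖A i j‖ else 0
termination_by i => i.val
decreasing_by exact h

def IsNekrasov {n : ℕ} {𝕜 : Type*} [RCLike 𝕜] (A : Matrix (Fin n) (Fin n) 𝕜) : Prop :=
  ∀ i, nekH A i < ‖A i i‖

noncomputable def nekZ {n : ℕ} {𝕜 : Type*} [RCLike 𝕜] (A : Matrix (Fin n) (Fin n) 𝕜) : Fin n → ℝ
  | i => (∑ j : Fin n, if h : j < i then ‖A i j‖ / ‖A j j‖ * nekZ A j else 0) + 1
termination_by i => i.val
decreasing_by exact h

noncomputable def nekEta {n : ℕ} {𝕜 : Type*} [RCLike 𝕜] (M : Matrix (Fin n) (Fin n) 𝕜) : Fin n → ℝ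
  | i => (∑ j : Fin n, if h : j < i then ‖M i j‖ / min ‖M j j‖ 1 * nekEta M j else 0) + 1
termination_by i => i.val
decreasing_by exact h

noncomputable def linftyNorm {n : ℕ} {𝕜 : Type*} [RCLike 𝕜] (A : Matrix (Fin n) (Fin n) 𝕜) : ℝ :=
  ⨆ i, ∑ j, ‖A i j‖

noncomputable def rPlus {n : ℕ} (M : Matrix (Fin n) (Fin n) ℝ) (i : Fin n) : ℝ :=
  Finset.fold max 0 (fun j => M i j) (Finset.univ.erase i)

noncomputable def BPlus {n : ℕ} (M : Matrix (Fin n) (Fin n) ℝ) : Matrix (Fin n) (Fin n) ℝ :=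
  Matrix.of fun i j => M i j - rPlus M i

def IsBNekrasov {n : ℕ} (M : Matrix (Fin n) (Fin n) ℝ) : Prop :=
  IsNekrasov (BPlus M) ∧ ∀ i, 0 < BPlus M i i

def IsLCPSolution {n : ℕ} (M : Matrix (Fin n) (Fin n) ℝ) (q x : Fin n → ℝ) : Prop :=
  (∀ i, 0 ≤ x i) ∧ (∀ i, 0 ≤ (M.mulVec x + q) i) ∧ ∑ i, (M.mulVec x + q) i * x i = 0

def IsPMatrix {n : ℕ} (M : Matrix (Fin n) (Fin n) ℝ) : Prop :=
  ∀ S : Finset (Fin n), 0 < (M.submatrix (fun i : S => (i : Fin n)) (fun j : S => (j : Fin n))).det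


lemma finStrong {n : ℕ} {P : Fin n → Prop} (h : ∀ i, (∀ j, j < i → P j) → P i) : ∀ i, P i :=
  fun i => WellFoundedLT.induction i h

lemma nekH_nonneg {n : ℕ} (A : Matrix (Fin n) (Fin n) ℝ) : ∀ i, 0 ≤ nekH A i := by
  apply finStrong
  intro i ih
  rw [nekH]
  apply add_nonneg
  · apply Finset.sum_nonneg; intro j _
    by_cases h : j < i
    · simp only [h, dif_pos]
      exact mul_nonneg (div_nonneg (norm_nonneg _) (norm_nonneg _)) (ih j h)
    · simp [h]
  · apply Finset.sum_nonneg; intro j _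
    by_cases h : i < j
    · simp [h]
    · simp [h]

lemma nekZ_one_le {n : ℕ} (A : Matrix (Fin n) (Fin n) ℝ) : ∀ i, 1 ≤ nekZ A i := by
  apply finStrong
  intro i ih
  rw [nekZ]
  have : (0:ℝ) ≤ ∑ j : Fin n, if h : j < i then ‖A i j‖ / ‖A j j‖ * nekZ A j else 0 := by
    apply Finset.sum_nonneg; intro j _
    by_cases h : j < i
    · simp only [h, dif_pos]
      exact mul_nonneg (div_nonneg (norm_nonneg _) (norm_nonneg _))
        (le_trans zero_le_one (ih j h))
    · simp [h]
  linarith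

lemma erase_sum_split {n : ℕ} (i : Fin n) (f : Fin n → ℝ) :
    ∑ j ∈ Finset.univ.erase i, f j
      = (∑ j : Fin n, if j < i then f j else 0) + ∑ j : Fin n, if i < j then f j else 0 := by
  rw [← Finset.sum_add_distrib]
  have : Finset.univ.erase i = Finset.univ.filter (fun j => j ≠ i) := by
    ext j; simp [Finset.mem_erase]
  rw [this, Finset.sum_filter]
  apply Finset.sum_congr rfl
  intro j _
  rcases lt_trichotomy j i with h | h | h
  · simp [h, ne_of_lt h, not_lt_of_gt h]
  · simp [h]
  · simp [h, (ne_of_lt h).symm, not_lt_of_gt h]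

lemma key_bound {n : ℕ} (A : Matrix (Fin n) (Fin n) ℝ) (hdiag : ∀ i, A i i = 1)
    (x b : Fin n → ℝ) (hAx : A.mulVec x = b) (c t : ℝ)
    (hb : ∀ j, |b j| ≤ c) (ht : ∀ j, |x j| ≤ t) :
    ∀ i, |x i| ≤ c * nekZ A i + t * nekH A i := by
  have hd1 : ∀ j : Fin n, ‖A j j‖ = 1 := fun j => by rw [hdiag j]; simp
  apply finStrong
  intro i ih
  -- row equation
  have hrow : ∑ j, A i j * x j = b i := by
    have := congrFun hAx i
    simpa [Matrix.mulVec, dotProduct] using this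
  have hxi : x i = b i - ∑ j ∈ Finset.univ.erase i, A i j * x j := by
    have h2 := Finset.add_sum_erase Finset.univ (fun j => A i j * x j) (Finset.mem_univ i)
    simp only [hdiag i, one_mul, hrow] at h2
    linarith
  have habs : |x i| ≤ c + ∑ j ∈ Finset.univ.erase i, ‖A i j‖ * |x j| := by
    rw [hxi]
    have h1 : |b i - ∑ j ∈ Finset.univ.erase i, A i j * x j|
        ≤ |b i| + |∑ j ∈ Finset.univ.erase i, A i j * x j| := abs_sub _ _
    have h2 : |∑ j ∈ Finset.univ.erase i, A i j * x j|
        ≤ ∑ j ∈ Finset.univ.erase i, ‖A i j‖ * |x j| := by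
      refine le_trans (Finset.abs_sum_le_sum_abs _ _) ?_
      apply Finset.sum_le_sum
      intro j _
      rw [abs_mul, Real.norm_eq_abs]
    have := hb i
    linarith
  rw [erase_sum_split] at habs
  -- bound the two sums
  have hS1 : (∑ j : Fin n, if j < i then ‖A i j‖ * |x j| else 0)
      ≤ ∑ j : Fin n, if j < i then ‖A i j‖ * (c * nekZ A j + t * nekH A j) else 0 := by
    apply Finset.sum_le_sum
    intro j _
    split_ifs with h
    · exact mul_le_mul_of_nonneg_left (ih j h) (norm_nonneg _)
    · exact le_rfl
  have hS2 : (∑ j : Fin n, if i < j then ‖A i j‖ * |x j| else 0)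
      ≤ ∑ j : Fin n, if i < j then ‖A i j‖ * t else 0 := by
    apply Finset.sum_le_sum
    intro j _
    split_ifs with h
    · exact mul_le_mul_of_nonneg_left (ht j) (norm_nonneg _)
    · exact le_rfl
  have e1 : (∑ j : Fin n, if j < i then ‖A i j‖ * (c * nekZ A j + t * nekH A j) else 0)
      = c * (∑ j : Fin n, if j < i then ‖A i j‖ / ‖A j j‖ * nekZ A j else 0)
        + t * (∑ j : Fin n, if j < i then ‖A i j‖ / ‖A j j‖ * nekH A j else 0) := by
    rw [Finset.mul_sum, Finset.mul_sum, ← Finset.sum_add_distrib]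
    apply Finset.sum_congr rfl
    intro j _
    split_ifs with h
    · rw [hd1 j, div_one]; ring
    · simp
  have e2 : (∑ j : Fin n, if i < j then ‖A i j‖ * t else 0)
      = t * ∑ j : Fin n, if i < j then ‖A i j‖ else 0 := by
    rw [Finset.mul_sum]
    apply Finset.sum_congr rfl
    intro j _
    split_ifs with h
    · ring
    · simp
  have hz : nekZ A i = (∑ j : Fin n, if j < i then ‖A i j‖ / ‖A j j‖ * nekZ A j else 0) + 1 := by
    rw [nekZ]; simp
  have hh : nekH A i = (∑ j : Fin n, if j < i then ‖A i j‖ / ‖A j j‖ * nekH A j else 0)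
      + ∑ j : Fin n, if i < j then ‖A i j‖ else 0 := by
    rw [nekH]; simp
  rw [hz, hh]
  rw [e1] at hS1
  rw [e2] at hS2
  nlinarith [habs, hS1, hS2]


lemma nekEta_one_le {n : ℕ} (M : Matrix (Fin n) (Fin n) ℝ) : ∀ i, 1 ≤ nekEta M i := by
  apply finStrong
  intro i ih
  rw [nekEta]
  have : (0:ℝ) ≤ ∑ j : Fin n, if h : j < i then ‖M i j‖ / min ‖M j j‖ 1 * nekEta M j else 0 := by
    apply Finset.sum_nonneg; intro j _
    by_cases h : j < i
    · simp only [h, dif_pos]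
      exact mul_nonneg (div_nonneg (norm_nonneg _) (le_min (norm_nonneg _) zero_le_one))
        (le_trans zero_le_one (ih j h))
    · simp [h]
  linarith

lemma norm_x_bound {n : ℕ} (A : Matrix (Fin n) (Fin n) ℝ) (hdiag : ∀ i, A i i = 1)
    (hNek : ∀ i, nekH A i < 1) (x b : Fin n → ℝ) (hAx : A.mulVec x = b)
    (c : ℝ) (hc : 0 ≤ c) (hb : ∀ j, |b j| ≤ c)
    (K : ℝ) (hK : ∀ i, nekZ A i / (1 - nekH A i) ≤ K) : ∀ j, |x j| ≤ c * K := by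
  intro j
  have hne : (Finset.univ : Finset (Fin n)).Nonempty := ⟨j, Finset.mem_univ j⟩
  obtain ⟨i, -, hi⟩ := Finset.exists_mem_eq_sup' hne (fun k => |x k|)
  set t := Finset.univ.sup' hne (fun k => |x k|) with htdef
  have ht : ∀ k, |x k| ≤ t := fun k => Finset.le_sup' (fun k => |x k|) (Finset.mem_univ k)
  have hkey := key_bound A hdiag x b hAx c t hb ht i
  have h1 : t ≤ c * nekZ A i + t * nekH A i := by
    calc t = |x i| := hi
      _ ≤ c * nekZ A i + t * nekH A i := hkey
  have hpos : 0 < 1 - nekH A i := by linarith [hNek i]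
  have h4 : t ≤ c * nekZ A i / (1 - nekH A i) := by
    rw [le_div_iff₀ hpos]; nlinarith
  have h3 : t ≤ c * K := by
    calc t ≤ c * nekZ A i / (1 - nekH A i) := h4
      _ = c * (nekZ A i / (1 - nekH A i)) := by ring
      _ ≤ c * K := mul_le_mul_of_nonneg_left (hK i) hc
  exact (ht j).trans h3

lemma hH_le {n : ℕ} (M Bm : Matrix (Fin n) (Fin n) ℝ) (d : Fin n → ℝ)
    (hd : ∀ i, 0 ≤ d i ∧ d i ≤ 1) (hM1 : ∀ i, ‖M i i‖ = 1) (hB1 : ∀ i, ‖Bm i i‖ = 1)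
    (hBoff : ∀ i j, i ≠ j → Bm i j = d i * M i j) :
    ∀ i, nekH Bm i ≤ d i * nekH M i := by
  apply finStrong
  intro i ih
  have hBn : ∀ j, j < i → ‖Bm i j‖ = d i * ‖M i j‖ := by
    intro j h
    rw [hBoff i j (ne_of_lt h).symm, norm_mul, Real.norm_eq_abs (d i), abs_of_nonneg (hd i).1]
  have hBn' : ∀ j, i < j → ‖Bm i j‖ = d i * ‖M i j‖ := by
    intro j h
    rw [hBoff i j (ne_of_lt h), norm_mul, Real.norm_eq_abs (d i), abs_of_nonneg (hd i).1]
  conv_lhs => rw [nekH]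
  conv_rhs => rw [nekH]
  rw [mul_add, Finset.mul_sum, Finset.mul_sum]
  apply add_le_add
  · apply Finset.sum_le_sum
    intro j _
    by_cases h : j < i
    · simp only [h, dif_pos]
      rw [hB1 j, hM1 j, div_one, div_one, hBn j h]
      have hj : nekH Bm j ≤ d j * nekH M j := ih j h
      have hMn : 0 ≤ nekH M j := nekH_nonneg M j
      have h2 : nekH Bm j ≤ nekH M j := by nlinarith [(hd j).1, (hd j).2]
      have := (hd i).1
      nlinarith [norm_nonneg (M i j), mul_nonneg this (norm_nonneg (M i j))]
    · simp [h]
  · apply Finset.sum_le_sum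
    intro j _
    by_cases h : i < j
    · simp only [h, if_pos]
      rw [hBn' j h]
    · simp [h]

lemma hZ_le {n : ℕ} (M Bm : Matrix (Fin n) (Fin n) ℝ) (d : Fin n → ℝ)
    (hd : ∀ i, 0 ≤ d i ∧ d i ≤ 1) (hM1 : ∀ i, ‖M i i‖ = 1) (hB1 : ∀ i, ‖Bm i i‖ = 1)
    (hBoff : ∀ i j, i ≠ j → Bm i j = d i * M i j) :
    ∀ i, nekZ Bm i ≤ nekEta M i := by
  apply finStrong
  intro i ih
  conv_lhs => rw [nekZ]
  conv_rhs => rw [nekEta]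
  apply add_le_add_left
  apply Finset.sum_le_sum
  intro j _
  by_cases h : j < i
  · simp only [h, dif_pos]
    rw [hB1 j, hM1 j, div_one, min_self, div_one]
    rw [hBoff i j (ne_of_lt h).symm, norm_mul, Real.norm_eq_abs (d i), abs_of_nonneg (hd i).1]
    have hj : nekZ Bm j ≤ nekEta M j := ih j h
    have h1 : 1 ≤ nekZ Bm j := nekZ_one_le Bm j
    have e1 : 0 ≤ (1 - d i) * (‖M i j‖ * nekZ Bm j) :=
      mul_nonneg (sub_nonneg.mpr (hd i).2)
        (mul_nonneg (norm_nonneg _) (le_trans zero_le_one h1))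
    have e2 : 0 ≤ ‖M i j‖ * (nekEta M j - nekZ Bm j) :=
      mul_nonneg (norm_nonneg _) (sub_nonneg.mpr hj)
    nlinarith [e1, e2]
  · simp [h]

theorem stmt10 {n : ℕ} (hn : 0 < n) (M : Matrix (Fin n) (Fin n) ℝ)
    (hdiag : ∀ i, M i i = 1) (hNek : IsNekrasov M)
    (d : Fin n → ℝ) (hd : ∀ i, 0 ≤ d i ∧ d i ≤ 1) :
    IsUnit (1 - Matrix.diagonal d + Matrix.diagonal d * M).det ∧
      linftyNorm (1 - Matrix.diagonal d + Matrix.diagonal d * M)⁻¹ ≤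
        Finset.univ.sup' ⟨⟨0, hn⟩, Finset.mem_univ _⟩
          (fun i => nekEta M i / (1 - nekH M i)) := by
  haveI : Nonempty (Fin n) := Fin.pos_iff_nonempty.mp hn
  set Bm : Matrix (Fin n) (Fin n) ℝ := 1 - Matrix.diagonal d + Matrix.diagonal d * M with hBm
  set K0 : ℝ := Finset.univ.sup' ⟨⟨0, hn⟩, Finset.mem_univ _⟩
      (fun i => nekEta M i / (1 - nekH M i)) with hK0
  have hBdiag : ∀ i, Bm i i = 1 := by
    intro i
    simp [hBm, Matrix.add_apply, Matrix.sub_apply, Matrix.one_apply_eq,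
      Matrix.diagonal_apply_eq, Matrix.diagonal_mul, hdiag i]
  have hBoff : ∀ i j, i ≠ j → Bm i j = d i * M i j := by
    intro i j hij
    simp [hBm, Matrix.add_apply, Matrix.sub_apply, Matrix.one_apply_ne hij,
      Matrix.diagonal_apply_ne d hij, Matrix.diagonal_mul]
  have hM1 : ∀ i, ‖M i i‖ = 1 := fun i => by rw [hdiag i]; simp
  have hB1 : ∀ i, ‖Bm i i‖ = 1 := fun i => by rw [hBdiag i]; simp
  have hNekM : ∀ i, nekH M i < 1 := by
    intro i
    have := hNek i
    rwa [hM1 i] at this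
  have hHle : ∀ i, nekH Bm i ≤ nekH M i := by
    intro i
    have h1 := hH_le M Bm d hd hM1 hB1 hBoff i
    have h2 := nekH_nonneg M i
    nlinarith [(hd i).1, (hd i).2]
  have hNekB : ∀ i, nekH Bm i < 1 := fun i => lt_of_le_of_lt (hHle i) (hNekM i)
  have hK : ∀ i, nekZ Bm i / (1 - nekH Bm i) ≤ K0 := by
    intro i
    have hpos : 0 < 1 - nekH M i := by linarith [hNekM i]
    have h1 : nekZ Bm i / (1 - nekH Bm i) ≤ nekEta M i / (1 - nekH M i) := by
      apply div_le_div₀ (le_trans zero_le_one (nekEta_one_le M i))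
        (hZ_le M Bm d hd hM1 hB1 hBoff i) hpos
      linarith [hHle i]
    exact le_trans h1 (Finset.le_sup' (fun i => nekEta M i / (1 - nekH M i)) (Finset.mem_univ i))
  have hdet : Bm.det ≠ 0 := by
    intro h0
    obtain ⟨v, hv0, hv⟩ := (Matrix.exists_mulVec_eq_zero_iff).mpr h0
    have hz : ∀ j, |v j| ≤ 0 * K0 := by
      apply norm_x_bound Bm hBdiag hNekB v 0 hv 0 le_rfl (fun j => by simp) K0 hK
    apply hv0
    funext j
    have := hz j
    rw [zero_mul] at this
    have h2 := abs_nonneg (v j)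
    have : |v j| = 0 := le_antisymm this h2
    simpa [abs_eq_zero] using this
  have hunit : IsUnit Bm.det := isUnit_iff_ne_zero.mpr hdet
  refine ⟨hunit, ?_⟩
  have hrow : ∀ i, ∑ j, ‖Bm⁻¹ i j‖ ≤ K0 := by
    intro i
    set s : Fin n → ℝ := fun j => if 0 ≤ Bm⁻¹ i j then 1 else -1 with hs
    set x : Fin n → ℝ := Bm⁻¹.mulVec s with hx
    have hBx : Bm.mulVec x = s := by
      rw [hx, Matrix.mulVec_mulVec, Matrix.mul_nonsing_inv Bm hunit, Matrix.one_mulVec]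
    have hb : ∀ j, |s j| ≤ 1 := by
      intro j
      rw [hs]
      dsimp only
      split_ifs <;> simp
    have hxb := norm_x_bound Bm hBdiag hNekB x s hBx 1 zero_le_one hb K0 hK i
    rw [one_mul] at hxb
    have hxi : x i = ∑ j, ‖Bm⁻¹ i j‖ := by
      rw [hx]
      simp only [Matrix.mulVec, dotProduct]
      apply Finset.sum_congr rfl
      intro j _
      rw [hs]
      dsimp only
      split_ifs with h
      · rw [mul_one, Real.norm_eq_abs, abs_of_nonneg h]
      · rw [Real.norm_eq_abs, abs_of_neg (lt_of_not_ge h)]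
        ring
    calc ∑ j, ‖Bm⁻¹ i j‖ = x i := hxi.symm
      _ ≤ |x i| := le_abs_self _
      _ ≤ K0 := hxb
  rw [linftyNorm]
  exact ciSup_le hrow
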